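/- For d ≥ 1, the dual polytope D_d* of the reflexive cs-crosspolytope D_d defined by the Wirth matrix A_d = [[2·Id_{d−1},0],[1⋯1,1]] equals conv(±(m_d* − Σ_{i=1}^{d−1} c_i m_i*) : c_i ∈ {0,1}) in the dual basis m_1*, …, m_d*, and the only lattice points on the boundary of D_d* are its vertices. -/

import Mathlib

open Pointwise Matrix

/-- Ambient space `ℝ^d`. -/
abbrev E (d : ℕ) := Fin d → ℝ

/-- A point of the lattice `M ≅ ℤ^d`. -/
def IsLatticePt {d : ℕ} (x : E d) : Prop := ∀ i, ∃ n : ℤ, x i = (n : ℝ)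

/-- The standard pairing between `N_ℝ` and `M_ℝ`. -/
def dot {d : ℕ} (x y : E d) : ℝ := ∑ i, x i * y i

/-- The dual (polar) polytope `P* = {x : ⟨x,y⟩ ≥ -1 ∀ y ∈ P}`. -/
def polarDual {d : ℕ} (P : Set (E d)) : Set (E d) := {x | ∀ y ∈ P, -1 ≤ dot x y}

/-- A lattice polytope: convex hull of finitely many lattice points. -/
def IsLatticePolytope {d : ℕ} (P : Set (E d)) : Prop :=
  ∃ S : Finset (E d), (∀ x ∈ S, IsLatticePt x) ∧ P = convexHull ℝ (S : Set (E d))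

/-- A reflexive polytope: a lattice polytope with `0` in its interior whose polar dual is
again a lattice polytope (i.e. the hull of its lattice points). -/
def IsReflexive {d : ℕ} (P : Set (E d)) : Prop :=
  IsLatticePolytope P ∧ 0 ∈ interior P ∧
    polarDual P = convexHull ℝ {x | x ∈ polarDual P ∧ IsLatticePt x}

/-- A facet: a nonempty exposed face of dimension `d - 1`. -/
def IsFacet {d : ℕ} (P F : Set (E d)) : Prop :=
  IsExposed ℝ P F ∧ F.Nonempty ∧
    Module.finrank ℝ (affineSpan ℝ F).direction = d - 1

/-- Simplicial polytope: every facet is a simplex (hull of `d` affinely independent points). -/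
def IsSimplicial {d : ℕ} (P : Set (E d)) : Prop :=
  ∀ F, IsFacet P F → ∃ v : Fin d → E d,
    AffineIndependent ℝ v ∧ F = convexHull ℝ (Set.range v)

/-- Pseudo-symmetric: some facet `F` has `-F` also a facet. -/
def IsPseudoSymmetric {d : ℕ} (P : Set (E d)) : Prop :=
  ∃ F, IsFacet P F ∧ IsFacet P (-F)

/-- Application of an integer matrix to a point of `ℝ^d`. -/
def applyU {d : ℕ} (U : Matrix (Fin d) (Fin d) ℤ) (x : E d) : E d :=
  (U.map (Int.cast : ℤ → ℝ)) *ᵥ x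

/-- Wirth matrix: block form `[[2·Id_f, 0], [C, Id_{d-f}]]` with `C` a `{0,1}`-matrix
each of whose columns has an odd number of `1`'s. -/
def IsWirth {d : ℕ} (A : Matrix (Fin d) (Fin d) ℤ) : Prop :=
  ∃ f : ℕ, f < d ∧
    (∀ i j : Fin d, (i : ℕ) < f → (j : ℕ) < f → A i j = if i = j then 2 else 0) ∧
    (∀ i j : Fin d, (i : ℕ) < f → f ≤ (j : ℕ) → A i j = 0) ∧
    (∀ i j : Fin d, f ≤ (i : ℕ) → (j : ℕ) < f → A i j = 0 ∨ A i j = 1) ∧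
    (∀ i j : Fin d, f ≤ (i : ℕ) → f ≤ (j : ℕ) → A i j = if i = j then 1 else 0) ∧
    (∀ j : Fin d, (j : ℕ) < f →
      Odd (Finset.univ.filter (fun i : Fin d => f ≤ (i : ℕ) ∧ A i j = 1)).card)

/-- The Wirth matrix `A_d` with `2`'s on the first `d-1` diagonal entries and last row all `1`'s. -/
def Ad (d : ℕ) : Matrix (Fin d) (Fin d) ℤ :=
  fun i j => if (i : ℕ) = d - 1 then 1 else if i = j then 2 else 0

/-- The reflexive cs-crosspolytope `D_d` associated to `A_d`. -/
def DdSet (d : ℕ) : Set (E d) :=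
  convexHull ℝ
    (Set.range (fun j : Fin d => (fun i => (Ad d i j : ℝ) : E d)) ∪
      Set.range (fun j : Fin d => (fun i => -(Ad d i j : ℝ) : E d)))

/-- The `i`-th standard (dual) unit vector in `ℝ^d`. -/
def unitVec {d : ℕ} (i : Fin d) : E d := Pi.single i (1 : ℝ)

/-- The claimed vertices of `D_d*`: the points `±(m_d* - ∑_{i<d-1} c_i m_i*)`, `c_i ∈ {0,1}`. -/
def DdDualVerts (d : ℕ) : Set (E d) :=
  {x | ∃ h : 0 < d, ∃ c : Fin d → ℝ, (∀ i, c i = 0 ∨ c i = 1) ∧ ∃ ε : ℝ,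
      (ε = 1 ∨ ε = -1) ∧
      x = ε • (unitVec (⟨d - 1, by omega⟩ : Fin d) -
        ∑ i ∈ Finset.univ.filter (fun i : Fin d => (i : ℕ) < d - 1), c i • unitVec i)}

section aux
variable {d : ℕ}

/-- `g x i = 2 x_i + x_last` for `i < d-1`, `x_last` for `i = last`. -/
def gfun (hd : 0 < d) (x : E d) : E d :=
  fun i => (if (i : ℕ) = d - 1 then 0 else 2 * x i) + x ⟨d - 1, by omega⟩

/-- Inverse linear map. -/
noncomputable def Tmap (hd : 0 < d) (u : E d) : E d :=
  fun i => if (i : ℕ) = d - 1 then u i else (u i - u ⟨d - 1, by omega⟩) / 2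

lemma last_coe (hd : 0 < d) : ((⟨d - 1, by omega⟩ : Fin d) : ℕ) = d - 1 := rfl

lemma gfun_Tmap (hd : 0 < d) (u : E d) : gfun hd (Tmap hd u) = u := by
  funext i
  simp only [gfun, Tmap, last_coe, if_pos rfl]
  split_ifs with h
  · have : i = (⟨d - 1, by omega⟩ : Fin d) := Fin.ext h
    rw [this]; ring
  · ring

lemma Tmap_gfun (hd : 0 < d) (x : E d) : Tmap hd (gfun hd x) = x := by
  funext i
  simp only [gfun, Tmap, last_coe, if_pos rfl]
  split_ifs with h
  · have : i = (⟨d - 1, by omega⟩ : Fin d) := Fin.ext h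
    rw [this]; ring
  · ring

lemma Tmap_linear (hd : 0 < d) : IsLinearMap ℝ (Tmap hd) := by
  constructor
  · intro u v; funext i; simp only [Tmap, Pi.add_apply]; split_ifs <;> ring
  · intro c u; funext i; simp only [Tmap, Pi.smul_apply, smul_eq_mul]; split_ifs <;> ring

lemma dot_isLinear (x : E d) : IsLinearMap ℝ (fun y => dot x y) := by
  constructor
  · intro u v; simp [dot, Pi.add_apply, mul_add, Finset.sum_add_distrib]
  · intro c u; simp [dot, Finset.mul_sum]; congr 1; funext i; ring

lemma dot_col (hd : 0 < d) (x : E d) (j : Fin d) :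
    dot x (fun i => (Ad d i j : ℝ)) = gfun hd x j := by
  have key : ∀ i : Fin d, x i * (Ad d i j : ℝ) =
      (if i = (⟨d - 1, by omega⟩ : Fin d) then x ⟨d - 1, by omega⟩ else 0) +
      (if i = j then (if (j : ℕ) = d - 1 then 0 else 2 * x j) else 0) := by
    intro i
    simp only [Ad]
    by_cases hi : (i : ℕ) = d - 1
    · have hi' : i = (⟨d - 1, by omega⟩ : Fin d) := Fin.ext hi
      rw [hi']
      simp only [if_pos hi, if_pos rfl]
      by_cases hij : (⟨d - 1, by omega⟩ : Fin d) = j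
      · rw [if_pos hij, ← hij]
        simp [last_coe hd]
      · rw [if_neg hij, if_neg hij]; push_cast; ring
    · have hi' : ¬ i = (⟨d - 1, by omega⟩ : Fin d) := by
        intro h; exact hi (by rw [h])
      rw [if_neg hi, if_neg hi']
      by_cases hij : i = j
      · subst hij
        have : ¬ (i : ℕ) = d - 1 := hi
        simp only [if_neg this, if_pos rfl, if_neg this]
        push_cast
        ring
      · simp [hij]
  simp only [dot, key, Finset.sum_add_distrib]
  rw [Finset.sum_ite_eq' Finset.univ, Finset.sum_ite_eq' Finset.univ]
  simp [gfun]
  ring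

end aux

section aux2
variable {d : ℕ}

def Pset (hd : 0 < d) : Set (E d) := {x | ∀ j, |gfun hd x j| ≤ 1}

lemma dot_neg (x v : E d) : dot x (fun i => -(v i)) = -(dot x v) := by
  simp [dot, mul_neg, Finset.sum_neg_distrib]

lemma polarDual_eq (hd : 0 < d) : polarDual (DdSet d) = Pset hd := by
  ext x
  constructor
  · intro hx j
    have h1 : -1 ≤ dot x (fun i => (Ad d i j : ℝ)) := by
      apply hx
      exact subset_convexHull ℝ _ (Set.mem_union_left _ ⟨j, rfl⟩)
    have h2 : -1 ≤ dot x (fun i => -(Ad d i j : ℝ)) := by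
      apply hx
      exact subset_convexHull ℝ _ (Set.mem_union_right _ ⟨j, rfl⟩)
    rw [dot_neg] at h2
    rw [← dot_col hd]
    rw [abs_le]
    constructor <;> linarith
  · intro hx y hy
    refine convexHull_min ?_ (convex_halfSpace_ge (dot_isLinear x) (-1)) hy
    rintro y (⟨j, rfl⟩ | ⟨j, rfl⟩)
    · have := abs_le.mp (hx j)
      rw [Set.mem_setOf_eq, dot_col hd]
      linarith [this.1]
    · have := abs_le.mp (hx j)
      rw [Set.mem_setOf_eq, dot_neg, dot_col hd]
      linarith [this.2]

lemma vert_apply (hd : 0 < d) (c : Fin d → ℝ) (ε : ℝ) (i : Fin d) :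
    (ε • (unitVec (⟨d - 1, by omega⟩ : Fin d) -
        ∑ k ∈ Finset.univ.filter (fun k : Fin d => (k : ℕ) < d - 1), c k • unitVec k)) i
    = ε * ((if (i : ℕ) = d - 1 then 1 else 0) - (if (i : ℕ) < d - 1 then c i else 0)) := by
  have hsum : (∑ k ∈ Finset.univ.filter (fun k : Fin d => (k : ℕ) < d - 1),
      c k • unitVec k) i = if (i : ℕ) < d - 1 then c i else 0 := by
    rw [Finset.sum_apply]
    have : ∀ k ∈ Finset.univ.filter (fun k : Fin d => (k : ℕ) < d - 1),
        (c k • unitVec k) i = if k = i then c k else 0 := by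
      intro k _
      simp only [Pi.smul_apply, unitVec, smul_eq_mul, Pi.single_apply]
      by_cases h : k = i
      · simp [h]
      · have : ¬ i = k := fun hh => h hh.symm
        simp [h, this]
    rw [Finset.sum_congr rfl this, Finset.sum_ite_eq' _ i c]
    simp
  have hunit : unitVec (⟨d - 1, by omega⟩ : Fin d) i =
      if (i : ℕ) = d - 1 then 1 else 0 := by
    simp only [unitVec, Pi.single_apply]
    by_cases h : (i : ℕ) = d - 1
    · have : i = (⟨d - 1, by omega⟩ : Fin d) := Fin.ext h
      simp [this, h]
    · have : ¬ i = (⟨d - 1, by omega⟩ : Fin d) := by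
        intro hh; exact h (by rw [hh])
      simp [this, h]
  simp only [Pi.smul_apply, Pi.sub_apply, smul_eq_mul, hsum, hunit]

lemma image_verts (hd : 0 < d) :
    Tmap hd '' (Set.pi Set.univ (fun _ : Fin d => ({-1, 1} : Set ℝ))) = DdDualVerts d := by
  ext x
  constructor
  · rintro ⟨u, hu, rfl⟩
    simp only [Set.mem_pi, Set.mem_univ, Set.mem_insert_iff, Set.mem_singleton_iff,
      true_implies] at hu
    have hlast := hu ⟨d - 1, by omega⟩
    have hsq : u ⟨d - 1, by omega⟩ * u ⟨d - 1, by omega⟩ = 1 := by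
      rcases hlast with h | h <;> rw [h] <;> norm_num
    refine ⟨hd, fun i => (1 - u ⟨d - 1, by omega⟩ * u i) / 2, ?_, u ⟨d - 1, by omega⟩, ?_, ?_⟩
    · intro i
      beta_reduce
      rcases hlast with h | h <;> rcases hu i with h' | h' <;> rw [h, h'] <;> norm_num
    · tauto
    · funext i
      rw [vert_apply hd]
      simp only [Tmap]
      by_cases h : (i : ℕ) = d - 1
      · have hi : i = (⟨d - 1, by omega⟩ : Fin d) := Fin.ext h
        rw [if_pos h, if_pos h, if_neg (by omega), hi]
        ring
      · rw [if_neg h, if_neg h, if_pos (by omega : (i : ℕ) < d - 1)]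
        beta_reduce
        rcases hlast with hl | hl <;> rw [hl] <;> rcases hu i with h' | h' <;> rw [h'] <;> ring
  · rintro ⟨h, c, hc, ε, hε, rfl⟩
    refine ⟨fun i => if (i : ℕ) = d - 1 then ε else ε * (1 - 2 * c i), ?_, ?_⟩
    · intro i _
      simp only [Set.mem_insert_iff, Set.mem_singleton_iff]
      beta_reduce
      split_ifs with hi
      · tauto
      · rcases hε with h' | h' <;> rcases hc i with h'' | h'' <;> rw [h', h''] <;> norm_num
    · funext i
      rw [vert_apply hd]
      simp only [Tmap]
      beta_reduce
      simp only [if_true]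
      by_cases hi : (i : ℕ) = d - 1
      · rw [if_pos hi, if_pos hi, if_pos hi, if_neg (by omega)]
        ring
      · rw [if_neg hi, if_neg hi, if_neg hi, if_pos (by omega : (i : ℕ) < d - 1)]
        ring

lemma cube_eq_hull :
    Set.pi Set.univ (fun _ : Fin d => Set.Icc (-1 : ℝ) 1) =
    convexHull ℝ (Set.pi Set.univ (fun _ : Fin d => ({-1, 1} : Set ℝ))) := by
  apply Set.Subset.antisymm
  · intro x hx
    apply mem_convexHull_pi
    intro i _
    rw [convexHull_pair, segment_eq_Icc (by norm_num : (-1 : ℝ) ≤ 1)]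
    exact hx i (Set.mem_univ i)
  · apply convexHull_min
    · intro x hx i _
      rcases hx i (Set.mem_univ i) with h | h <;> rw [h] <;> norm_num
    · exact convex_pi (fun i _ => convex_Icc _ _)

lemma Pset_eq_hull (hd : 0 < d) : Pset hd = convexHull ℝ (DdDualVerts d) := by
  have himg : Pset hd = Tmap hd '' (Set.pi Set.univ (fun _ : Fin d => Set.Icc (-1 : ℝ) 1)) := by
    ext x
    constructor
    · intro hx
      refine ⟨gfun hd x, ?_, Tmap_gfun hd x⟩
      intro i _
      rw [Set.mem_Icc, ← abs_le]
      exact hx i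
    · rintro ⟨u, hu, rfl⟩
      intro j
      rw [gfun_Tmap]
      rw [abs_le]
      exact ⟨(hu j (Set.mem_univ j)).1, (hu j (Set.mem_univ j)).2⟩
  rw [himg, cube_eq_hull, (Tmap_linear hd).image_convexHull, image_verts hd]

end aux2
section aux3
variable {d : ℕ}

lemma Pset_closed (hd : 0 < d) : IsClosed (Pset hd) := by
  have heq : Pset hd = ⋂ j, {x : E d | |gfun hd x j| ≤ 1} := by
    ext x; simp [Pset, Set.mem_iInter]
  rw [heq]
  apply isClosed_iInter
  intro j
  have hc : Continuous fun x : E d => gfun hd x j := by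
    simp only [gfun]
    by_cases h : (j : ℕ) = d - 1
    · simp only [if_pos h]; fun_prop
    · simp only [if_neg h]; fun_prop
  exact isClosed_le hc.abs continuous_const

lemma zero_interior (hd : 0 < d) : (0 : E d) ∈ interior (Pset hd) := by
  rw [mem_interior]
  refine ⟨Metric.ball 0 (1/3), ?_, Metric.isOpen_ball, Metric.mem_ball_self (by norm_num)⟩
  intro y hy
  rw [Metric.mem_ball, dist_zero_right] at hy
  intro j
  have h1 : |y j| ≤ ‖y‖ := by rw [← Real.norm_eq_abs]; exact norm_le_pi_norm y j
  have h2 : |y ⟨d - 1, by omega⟩| ≤ ‖y‖ := by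
    rw [← Real.norm_eq_abs]; exact norm_le_pi_norm y _
  simp only [gfun]
  split_ifs with h
  · rw [zero_add]; linarith
  · have h3 := abs_add_le (2 * y j) (y ⟨d - 1, by omega⟩)
    rw [abs_mul, abs_two] at h3
    linarith

lemma int_abs_le_one {n : ℤ} (h : |(n : ℝ)| ≤ 1) : n = -1 ∨ n = 0 ∨ n = 1 := by
  rw [abs_le] at h
  have h1 : (-1 : ℤ) ≤ n := by exact_mod_cast h.1
  have h2 : n ≤ 1 := by exact_mod_cast h.2
  omega

end aux3

theorem Dd_dual_description (d : ℕ) (hd : 0 < d) :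
    polarDual (DdSet d) = convexHull ℝ (DdDualVerts d) ∧
    ∀ x ∈ frontier (polarDual (DdSet d)), IsLatticePt x → x ∈ DdDualVerts d := by
  have hP := polarDual_eq hd
  constructor
  · rw [hP, Pset_eq_hull hd]
  · intro x hx hlat
    rw [hP] at hx
    have hxP : x ∈ Pset hd := by
      have h1 : x ∈ closure (Pset hd) := hx.1
      rwa [(Pset_closed hd).closure_eq] at h1
    choose n hn using hlat
    have hlastbound : |x ⟨d - 1, by omega⟩| ≤ 1 := by
      have h1 := hxP ⟨d - 1, by omega⟩
      simpa [gfun] using h1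
    have hnL : n ⟨d - 1, by omega⟩ = -1 ∨ n ⟨d - 1, by omega⟩ = 0 ∨
        n ⟨d - 1, by omega⟩ = 1 := by
      apply int_abs_le_one
      rw [← hn]; exact hlastbound
    -- bounds for the other coordinates
    have hbound : ∀ i : Fin d, (i : ℕ) < d - 1 →
        -1 ≤ 2 * n i + n ⟨d - 1, by omega⟩ ∧ 2 * n i + n ⟨d - 1, by omega⟩ ≤ 1 := by
      intro i hi
      have h1 := hxP i
      simp only [gfun, if_neg (by omega : ¬ (i : ℕ) = d - 1)] at h1
      rw [hn i, hn ⟨d - 1, by omega⟩, abs_le] at h1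
      constructor
      · exact_mod_cast h1.1
      · exact_mod_cast h1.2
    rcases hnL with hL | hL | hL
    · -- ε = -1
      refine ⟨hd, fun i => if (i : ℕ) < d - 1 then (n i : ℝ) else 0, ?_, -1, Or.inr rfl, ?_⟩
      · intro i
        by_cases hi : (i : ℕ) < d - 1
        · have := hbound i hi
          rw [hL] at this
          have hni : n i = 0 ∨ n i = 1 := by omega
          rcases hni with h | h <;> simp [hi, h]
        · simp [hi]
      · funext i
        rw [vert_apply hd]
        by_cases hi : (i : ℕ) = d - 1
        · have : i = (⟨d - 1, by omega⟩ : Fin d) := Fin.ext hi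
          rw [this, hn, hL]
          norm_num [last_coe hd]
        · rw [hn i, if_neg hi, if_pos (by omega : (i : ℕ) < d - 1)]
          beta_reduce
          rw [if_pos (by omega : (i : ℕ) < d - 1)]
          ring
    · -- x = 0, contradiction with interior
      exfalso
      have hx0 : x = 0 := by
        funext i
        by_cases hi : (i : ℕ) = d - 1
        · have : i = (⟨d - 1, by omega⟩ : Fin d) := Fin.ext hi
          rw [this, hn, hL]; norm_num
        · have := hbound i (by omega)
          rw [hL] at this
          have hni : n i = 0 := by omega
          rw [hn i, hni]; norm_num
      have h2 : x ∉ interior (Pset hd) := hx.2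
      rw [hx0] at h2
      exact h2 (zero_interior hd)
    · -- ε = 1
      refine ⟨hd, fun i => if (i : ℕ) < d - 1 then -(n i : ℝ) else 0, ?_, 1, Or.inl rfl, ?_⟩
      · intro i
        by_cases hi : (i : ℕ) < d - 1
        · have := hbound i hi
          rw [hL] at this
          have hni : n i = 0 ∨ n i = -1 := by omega
          rcases hni with h | h <;> simp [hi, h]
        · simp [hi]
      · funext i
        rw [vert_apply hd]
        by_cases hi : (i : ℕ) = d - 1
        · have : i = (⟨d - 1, by omega⟩ : Fin d) := Fin.ext hi
          rw [this, hn, hL]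
          norm_num [last_coe hd]
        · rw [hn i, if_neg hi, if_pos (by omega : (i : ℕ) < d - 1)]
          beta_reduce
          rw [if_pos (by omega : (i : ℕ) < d - 1)]
          ring
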